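/- Let p be an odd prime, h ≥ h₀ ≥ 1 integers, and u an integer coprime to p. Write u = [u]⟨u⟩ with [u] ∈ μ_{p−1}(Z_p) and ⟨u⟩ ∈ 1 + pZ_p (Teichmüller decomposition). Then ⟨u⟩ ≡ 1 (mod p^{h−h₀}) if and only if there exist ξ ∈ (Z/p^h Z)^× with ξ^{p−1} = 1 and an integer a with 0 ≤ a ≤ p^{h₀} − 1 such that u ≡ ξ(1 + a p^{h−h₀}) (mod p^h). -/

import Mathlib

private lemma root_unique (p : ℕ) (hp : p.Prime) (m : ℕ) (hm : 1 ≤ m)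
    (x y : ZMod (p ^ m)) (hx : x ^ (p - 1) = 1) (hy : y ^ (p - 1) = 1)
    (hxy : (p : ZMod (p ^ m)) ∣ x - y) : x = y := by
  haveI : NeZero (p ^ m) := ⟨pow_ne_zero _ hp.pos.ne'⟩
  obtain ⟨c, hc⟩ := hxy
  -- lift to ℤ
  have hcast : ((↑x.val - ↑y.val - (p : ℤ) * ↑c.val : ℤ) : ZMod (p ^ m)) = 0 := by
    push_cast
    rw [ZMod.natCast_val, ZMod.natCast_val, ZMod.natCast_val, ZMod.cast_id, ZMod.cast_id,
      ZMod.cast_id, hc]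
    ring
  rw [ZMod.intCast_zmod_eq_zero_iff_dvd] at hcast
  have hpm : (p : ℤ) ∣ (p : ℤ) ^ m := dvd_pow_self _ (by omega)
  have hdvd : (p : ℤ) ∣ (↑x.val - ↑y.val : ℤ) := by
    have h1 : (p : ℤ) ∣ ((↑x.val - ↑y.val - (p : ℤ) * ↑c.val : ℤ)) := by
      refine hpm.trans ?_
      exact_mod_cast hcast
    have h2 : (p : ℤ) ∣ (p : ℤ) * ↑c.val := Dvd.intro _ rfl
    simpa using dvd_add h1 h2
  have hpow := dvd_sub_pow_of_dvd_sub hdvd (m - 1)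
  rw [Nat.sub_add_cancel hm] at hpow
  have hz : ((( ↑x.val ^ p ^ (m-1) - ↑y.val ^ p ^ (m-1) : ℤ)) : ZMod (p ^ m)) = 0 := by
    rw [ZMod.intCast_zmod_eq_zero_iff_dvd]
    exact_mod_cast hpow
  push_cast at hz
  rw [ZMod.natCast_val, ZMod.natCast_val, ZMod.cast_id, ZMod.cast_id, sub_eq_zero] at hz
  -- p^(m-1) = (p-1)*q + 1
  have hd := Nat.sub_dvd_pow_sub_pow p 1 (m - 1)
  rw [one_pow] at hd
  obtain ⟨q, hq⟩ := hd
  have hpos : 1 ≤ p ^ (m - 1) := Nat.one_le_pow _ _ hp.pos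
  have hq' : p ^ (m - 1) = (p - 1) * q + 1 := by omega
  calc x = x ^ (p ^ (m - 1)) := by rw [hq', pow_add, pow_mul, hx, one_pow, one_mul, pow_one]
    _ = y ^ (p ^ (m - 1)) := hz
    _ = y := by rw [hq', pow_add, pow_mul, hy, one_pow, one_mul, pow_one]

/-- Teichmüller decomposition criterion: writing `u = [u]⟨u⟩` in `ℤ_p` with
`[u]^(p-1) = 1` and `⟨u⟩ ≡ 1 (mod p)`, one has `⟨u⟩ ≡ 1 (mod p^{h-h₀})` iff
`u ≡ ξ(1 + a p^{h-h₀}) (mod p^h)` for some `(p-1)`-st root of unity `ξ` in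
`ℤ/p^h` and some `0 ≤ a ≤ p^{h₀} - 1`. -/
theorem stmt_14 (p : ℕ) (hp : p.Prime) (hodd : Odd p)
    (h h₀ : ℕ) (hh₀ : 1 ≤ h₀) (hhh : h₀ ≤ h)
    [Fact p.Prime]
    (u : ℤ) (hu : IsCoprime u (p : ℤ))
    (v w : ℤ_[p]) (hv : v ^ (p - 1) = 1) (hw : (p : ℤ_[p]) ∣ (w - 1))
    (huvw : (u : ℤ_[p]) = v * w) :
    ((p : ℤ_[p]) ^ (h - h₀) ∣ (w - 1)) ↔
      ∃ ξ : ZMod (p ^ h), ξ ^ (p - 1) = 1 ∧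
        ∃ a : ℕ, a ≤ p ^ h₀ - 1 ∧
          (u : ZMod (p ^ h)) = ξ * (1 + (a : ZMod (p ^ h)) * (p : ZMod (p ^ h)) ^ (h - h₀)) := by
  haveI : NeZero (p ^ h₀) := ⟨pow_ne_zero _ hp.pos.ne'⟩
  constructor
  · rintro ⟨t, ht⟩
    set A : ℕ := (PadicInt.toZModPow h₀ t).val with hA
    have hkA : (p : ℤ_[p]) ^ h₀ ∣ t - (A : ℤ_[p]) := by
      have hker : PadicInt.toZModPow h₀ (t - (A : ℤ_[p])) = 0 := by
        rw [map_sub, map_natCast, hA, ZMod.natCast_val, ZMod.cast_id, sub_self]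
      rwa [← RingHom.mem_ker, PadicInt.ker_toZModPow, Ideal.mem_span_singleton] at hker
    obtain ⟨s, hs⟩ := hkA
    have key : PadicInt.toZModPow h
        ((u : ℤ_[p]) - v * (1 + (A : ℤ_[p]) * (p : ℤ_[p]) ^ (h - h₀))) = 0 := by
      rw [← RingHom.mem_ker, PadicInt.ker_toZModPow, Ideal.mem_span_singleton]
      refine ⟨v * s, ?_⟩
      rw [show (p : ℤ_[p]) ^ h = (p : ℤ_[p]) ^ (h - h₀) * (p : ℤ_[p]) ^ h₀ by
        rw [← pow_add]; congr 1; omega]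
      linear_combination huvw + v * ht + v * (p : ℤ_[p]) ^ (h - h₀) * hs
    refine ⟨PadicInt.toZModPow h v, by rw [← map_pow, hv, map_one], A, ?_, ?_⟩
    · have := ZMod.val_lt (PadicInt.toZModPow h₀ t)
      omega
    · simp only [map_sub, map_mul, map_add, map_one, map_pow, map_natCast, map_intCast,
        sub_eq_zero] at key
      exact key
  · rintro ⟨ξ, hξ, a, ha, hua⟩
    by_cases hm : h - h₀ = 0
    · simp [hm]
    have hm1 : 1 ≤ h - h₀ := by omega
    set m := h - h₀ with hmdef
    set f := ZMod.castHom (pow_dvd_pow p (Nat.sub_le h h₀)) (ZMod (p ^ m)) with hf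
    have hp0 : (p : ZMod (p ^ m)) ^ m = 0 := by
      rw [← Nat.cast_pow, ZMod.natCast_self]
    have h1 : (u : ZMod (p ^ m)) = f ξ := by
      apply_fun f at hua
      simp only [map_intCast, map_mul, map_add, map_one, map_natCast, map_pow] at hua
      rw [hua, hp0, mul_zero, add_zero, mul_one]
    set U := PadicInt.toZModPow m (u : ℤ_[p]) with hU
    set V := PadicInt.toZModPow m v with hV
    set W := PadicInt.toZModPow m w with hW
    have hUfξ : U = f ξ := by rw [hU, map_intCast]; exact h1
    have hUpow : U ^ (p - 1) = 1 := by rw [hUfξ, ← map_pow, hξ, map_one]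
    have hVpow : V ^ (p - 1) = 1 := by rw [hV, ← map_pow, hv, map_one]
    have hUVW : U = V * W := by rw [hU, huvw, map_mul]
    obtain ⟨c, hc⟩ := hw
    have hW1 : W - 1 = (p : ZMod (p ^ m)) * PadicInt.toZModPow m c := by
      rw [hW, show (1 : ZMod (p ^ m)) = PadicInt.toZModPow m 1 from (map_one _).symm,
        ← map_sub, hc, map_mul, map_natCast]
    have hdvd : (p : ZMod (p ^ m)) ∣ U - V := by
      refine ⟨V * PadicInt.toZModPow m c, ?_⟩
      rw [hUVW]
      have : V * W - V = V * (W - 1) := by ring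
      rw [this, hW1]; ring
    have hUV : U = V := root_unique p hp m hm1 U V hUpow hVpow hdvd
    have hVunit : IsUnit V := by
      refine IsUnit.of_mul_eq_one (a := V) (V ^ (p - 2)) ?_
      have h2 : p - 2 + 1 = p - 1 := by have := hp.two_le; omega
      rw [mul_comm, ← pow_succ, h2, hVpow]
    have hWone : W = 1 := by
      have : V * W = V * 1 := by rw [mul_one, ← hUVW]; exact hUV
      exact hVunit.mul_left_cancel this
    have : PadicInt.toZModPow m (w - 1) = 0 := by
      rw [map_sub, map_one, ← hW, hWone, sub_self]
    rwa [← RingHom.mem_ker, PadicInt.ker_toZModPow, Ideal.mem_span_singleton] at this
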